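/- (Subgradient comparison between model and objective.) Let g : ℝ^d → ℝ ∪ {+∞} be closed (lower semicontinuous), let γ > 0, and suppose that for every x ∈ ℝ^d there is a convex function g_x : ℝ^d → ℝ ∪ {+∞} with |g_x(y) − g(y)| ≤ (γ/2)‖y − x‖² for all y ∈ ℝ^d. Fix x̄ ∈ ℝ^d and λ > 0, and define G_x̄(y) := g_x̄(y) + (γ/2)‖y − x̄‖². Then for every point y₁ with G_x̄(y₁) finite and every Fréchet subgradient v₁ ∈ ∂G_x̄(y₁), there exists a point y₂ ∈ ℝ^d with ‖y₁ − y₂‖ ≤ 2λ, ∂g(y₂) ≠ ∅, and dist(v₁, ∂g(y₂)) ≤ γ‖y₁ − x̄‖²/λ + 2γ‖y₂ − x̄‖, where ∂g denotes the Fréchet subdifferential of g. -/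

import Mathlib

open Metric Filter
open scoped RealInnerProductSpace

/-- Convexity of an extended-real-valued function. -/
def ERealConvexOn {d : ℕ} (h : EuclideanSpace ℝ (Fin d) → EReal) : Prop :=
  ∀ y z : EuclideanSpace ℝ (Fin d), ∀ a b : ℝ, 0 ≤ a → 0 ≤ b → a + b = 1 →
    h (a • y + b • z) ≤ (a : EReal) * h y + (b : EReal) * h z

/-- The Fréchet subdifferential of an extended-real-valued function `h` at a
point `x` where `h x` is finite. -/
def frechetSubdiff {d : ℕ} (h : EuclideanSpace ℝ (Fin d) → EReal)
    (x : EuclideanSpace ℝ (Fin d)) : Set (EuclideanSpace ℝ (Fin d)) :=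
  {v | h x ≠ ⊤ ∧ h x ≠ ⊥ ∧ ∀ ε > (0 : ℝ), ∃ δ > (0 : ℝ), ∀ y, ‖y - x‖ < δ →
    (((h x).toReal + ⟪v, y - x⟫ - ε * ‖y - x‖ : ℝ) : EReal) ≤ h y}

/-- The model `G_x̄(y) := g_x̄(y) + (γ/2)‖y − x̄‖²` built from a model `g_x̄`. -/
noncomputable def Gmodel {d : ℕ} (gx : EuclideanSpace ℝ (Fin d) → EReal) (γ : ℝ)
    (xb : EuclideanSpace ℝ (Fin d)) : EuclideanSpace ℝ (Fin d) → EReal :=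
  fun y => gx y + ((γ / 2 * ‖y - xb‖ ^ 2 : ℝ) : EReal)

lemma coe_le_add_coe_iff (x : EReal) (a b : ℝ) :
    (a : EReal) ≤ x + (b:EReal) ↔ ((a - b : ℝ) : EReal) ≤ x := by
  induction x using EReal.rec with
  | bot => simpa using EReal.coe_ne_bot (a-b)
  | coe r =>
      rw [← EReal.coe_add, EReal.coe_le_coe_iff, EReal.coe_le_coe_iff]
      constructor <;> intro <;> linarith
  | top => simp

lemma add_ne_bot' {x : EReal} (hx : x ≠ ⊥) (b : ℝ) : x + (b : EReal) ≠ ⊥ := by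
  simp [EReal.add_eq_bot_iff, hx]

lemma lsc_min_on_compact {X : Type*} [MetricSpace X] {f : X → EReal}
    (hf : LowerSemicontinuous f) {s : Set X} (hs : IsCompact s) (hne : s.Nonempty) :
    ∃ x ∈ s, ∀ y ∈ s, f x ≤ f y := by
  set m := sInf (f '' s) with hm
  obtain ⟨u, hu_anti, hu_tendsto, hu_mem⟩ :=
    exists_seq_tendsto_sInf (hne.image f) (OrderBot.bddBelow _)
  choose x hxs hxval using fun n => (hu_mem n : u n ∈ f '' s)
  obtain ⟨z, hzs, φ, hφ, hconv⟩ := hs.tendsto_subseq hxs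
  refine ⟨z, hzs, fun y hy => ?_⟩
  have hmle : m ≤ f y := sInf_le ⟨y, hy, rfl⟩
  refine le_trans ?_ hmle
  by_contra hlt
  push_neg at hlt
  obtain ⟨t, hmt, htf⟩ := exists_between hlt
  have hev : ∀ᶠ n in atTop, t < f (x (φ n)) := hconv.eventually (hf z t htf)
  have huφ : Tendsto (fun n => u (φ n)) atTop (nhds m) := hu_tendsto.comp hφ.tendsto_atTop
  have hev2 : ∀ᶠ n in atTop, u (φ n) < t := huφ.eventually_lt_const hmt
  obtain ⟨n, h1, h2⟩ := (hev.and hev2).exists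
  rw [hxval] at h1
  exact absurd (h1.trans h2) (lt_irrefl _)

lemma normsq_combo {d : ℕ} (u w : EuclideanSpace ℝ (Fin d)) (a b : ℝ) (hab : a + b = 1) :
    ‖a•u + b•w‖^2 = a*‖u‖^2 + b*‖w‖^2 - a*b*‖u-w‖^2 := by
  have h : ∀ z : EuclideanSpace ℝ (Fin d), ‖z‖^2 = ⟪z,z⟫ :=
    fun z => (real_inner_self_eq_norm_sq z).symm
  have hc := real_inner_comm u w
  have hb : b = 1 - a := by linarith
  subst hb
  simp only [h, inner_add_left, inner_add_right, inner_sub_left, inner_sub_right,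
    real_inner_smul_left, real_inner_smul_right, hc]
  ring

lemma normsq_expand {d : ℕ} (p q : EuclideanSpace ℝ (Fin d)) :
    ‖p + q‖^2 = ‖p‖^2 + 2*⟪p,q⟫ + ‖q‖^2 := by
  have := norm_add_sq_real p q; linarith

set_option maxHeartbeats 1600000 in
/-- **Subgradient comparison between model and objective.** -/
theorem subgradient_comparison
    {d : ℕ} (g : EuclideanSpace ℝ (Fin d) → EReal)
    (gfam : EuclideanSpace ℝ (Fin d) → EuclideanSpace ℝ (Fin d) → EReal)
    (hglsc : LowerSemicontinuous g) (hgbot : ∀ y, g y ≠ ⊥)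
    (γ lam : ℝ) (hγ : 0 < γ) (hlam : 0 < lam)
    (hfambot : ∀ x y, gfam x y ≠ ⊥)
    (hconv : ∀ x, ERealConvexOn (gfam x))
    (happ₁ : ∀ x y, gfam x y ≤ g y + ((γ / 2 * ‖y - x‖ ^ 2 : ℝ) : EReal))
    (happ₂ : ∀ x y, g y ≤ gfam x y + ((γ / 2 * ‖y - x‖ ^ 2 : ℝ) : EReal))
    (xb : EuclideanSpace ℝ (Fin d)) :
    ∀ y₁, Gmodel (gfam xb) γ xb y₁ ≠ ⊤ →
      ∀ v₁ ∈ frechetSubdiff (Gmodel (gfam xb) γ xb) y₁,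
        ∃ y₂ : EuclideanSpace ℝ (Fin d), ‖y₁ - y₂‖ ≤ 2 * lam ∧
          (frechetSubdiff g y₂).Nonempty ∧
          infDist v₁ (frechetSubdiff g y₂)
            ≤ γ * ‖y₁ - xb‖ ^ 2 / lam + 2 * γ * ‖y₂ - xb‖ := by
  intro y₁ hGtop v₁ hv₁
  obtain ⟨hT, hB, hsub⟩ := hv₁
  set gx := gfam xb with hgxdef
  set G := Gmodel (gfam xb) γ xb with hGdef
  have hGeq : ∀ z, G z = gx z + ((γ / 2 * ‖z - xb‖ ^ 2 : ℝ) : EReal) := fun z => rfl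
  have hGbot : ∀ y, G y ≠ ⊥ := fun y => add_ne_bot' (hfambot xb y) _
  set p := (G y₁).toReal with hp
  have hGy1 : G y₁ = (p : EReal) := (EReal.coe_toReal hT (hGbot y₁)).symm
  -- segment convexity of G
  have hseg : ∀ y, G y ≠ ⊤ → ∀ t : ℝ, 0 < t → t ≤ 1 →
      G (y₁ + t•(y - y₁)) ≤ (((1-t) * p + t * (G y).toReal : ℝ) : EReal) := by
    intro y hyT t ht0 ht1
    have hgx1T : gx y₁ ≠ ⊤ := by
      intro h
      exact hT (by rw [hGeq y₁, h, EReal.top_add_of_ne_bot (EReal.coe_ne_bot _)])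
    have hgxyT : gx y ≠ ⊤ := by
      intro h
      exact hyT (by rw [hGeq y, h, EReal.top_add_of_ne_bot (EReal.coe_ne_bot _)])
    set a₁ := (gx y₁).toReal with ha₁
    set a := (gx y).toReal with ha
    have hgx1 : gx y₁ = (a₁ : EReal) := (EReal.coe_toReal hgx1T (hfambot xb y₁)).symm
    have hgxy : gx y = (a : EReal) := (EReal.coe_toReal hgxyT (hfambot xb y)).symm
    have hpval : p = a₁ + γ/2 * ‖y₁ - xb‖^2 := by
      have h1 : G y₁ = ((a₁ + γ/2 * ‖y₁ - xb‖^2 : ℝ) : EReal) := by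
        rw [hGeq y₁, hgx1, ← EReal.coe_add]
      rw [hp, h1, EReal.toReal_coe]
    have hryval : (G y).toReal = a + γ/2 * ‖y - xb‖^2 := by
      have h1 : G y = ((a + γ/2 * ‖y - xb‖^2 : ℝ) : EReal) := by
        rw [hGeq y, hgxy, ← EReal.coe_add]
      rw [h1, EReal.toReal_coe]
    have hcv := hconv xb y₁ y (1-t) t (by linarith) ht0.le (by ring)
    rw [← hgxdef] at hcv
    rw [hgx1, hgxy, ← EReal.coe_mul, ← EReal.coe_mul, ← EReal.coe_add] at hcv
    have hpt : (1-t)•y₁ + t•y = y₁ + t•(y - y₁) := by module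
    rw [hpt] at hcv
    have hqd : γ/2 * ‖(y₁ + t•(y - y₁)) - xb‖^2
        ≤ (1-t) * (γ/2 * ‖y₁ - xb‖^2) + t * (γ/2 * ‖y - xb‖^2) := by
      have h1 : (y₁ + t•(y - y₁)) - xb = (1-t)•(y₁ - xb) + t•(y - xb) := by module
      rw [h1, normsq_combo _ _ _ _ (by ring)]
      have h2 : 0 ≤ (1-t) * t * ‖(y₁ - xb) - (y - xb)‖^2 :=
        mul_nonneg (mul_nonneg (by linarith) ht0.le) (sq_nonneg _)
      nlinarith
    calc G (y₁ + t•(y - y₁))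
        = gx (y₁ + t•(y - y₁)) + ((γ/2 * ‖(y₁ + t•(y - y₁)) - xb‖^2 : ℝ) : EReal) :=
          hGeq _
      _ ≤ (((1-t)*a₁ + t*a : ℝ) : EReal) + ((γ/2 * ‖(y₁ + t•(y - y₁)) - xb‖^2 : ℝ) : EReal) :=
          add_le_add_left hcv _
      _ ≤ (((1-t)*a₁ + t*a : ℝ) : EReal)
            + (((1-t) * (γ/2 * ‖y₁ - xb‖^2) + t * (γ/2 * ‖y - xb‖^2) : ℝ) : EReal) :=
          add_le_add_right (EReal.coe_le_coe_iff.mpr hqd) _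
      _ = (((1-t) * p + t * (G y).toReal : ℝ) : EReal) := by
          rw [← EReal.coe_add]
          exact EReal.coe_eq_coe_iff.mpr (by rw [hpval, hryval]; ring)
  -- global subgradient inequality for G
  have hglob : ∀ y, ((p + ⟪v₁, y - y₁⟫ : ℝ) : EReal) ≤ G y := by
    intro y
    rcases eq_or_ne y y₁ with rfl | hne
    · simp only [sub_self, inner_zero_right, add_zero]
      rw [hGy1]
    · by_cases hyT : G y = ⊤
      · rw [hyT]; exact le_top
      · have hn : 0 < ‖y - y₁‖ := by
          rw [norm_pos_iff]; exact sub_ne_zero.mpr hne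
        set ry := (G y).toReal with hry
        have hGy : G y = (ry : EReal) := (EReal.coe_toReal hyT (hGbot y)).symm
        set c := ⟪v₁, y - y₁⟫ with hc
        have key : ∀ ε : ℝ, 0 < ε → p + c - ry ≤ ε * ‖y - y₁‖ := by
          intro ε hε
          obtain ⟨δ, hδ, hδp⟩ := hsub ε hε
          set t := min (δ / (2 * ‖y - y₁‖)) 1 with htdef
          have ht0 : 0 < t := lt_min (by positivity) one_pos
          have ht1 : t ≤ 1 := min_le_right _ _
          have htn : t * ‖y - y₁‖ < δ := by
            have hle : t ≤ δ / (2*‖y - y₁‖) := min_le_left _ _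
            have : t * ‖y - y₁‖ ≤ δ / (2*‖y - y₁‖) * ‖y - y₁‖ := by nlinarith
            have h2 : δ / (2*‖y - y₁‖) * ‖y - y₁‖ = δ/2 := by field_simp
            linarith
          have hz : ‖(y₁ + t•(y - y₁)) - y₁‖ < δ := by
            have h1 : (y₁ + t•(y - y₁)) - y₁ = t • (y - y₁) := by module
            rw [h1, norm_smul, Real.norm_eq_abs, abs_of_pos ht0]
            exact htn
          have h1 := hδp (y₁ + t•(y - y₁)) hz
          have h2 := hseg y hyT t ht0 ht1
          have hin : ⟪v₁, (y₁ + t•(y - y₁)) - y₁⟫ = t * c := by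
            rw [show (y₁ + t•(y - y₁)) - y₁ = t • (y - y₁) by module,
              real_inner_smul_right]
          have hnr : ‖(y₁ + t•(y - y₁)) - y₁‖ = t * ‖y - y₁‖ := by
            rw [show (y₁ + t•(y - y₁)) - y₁ = t • (y - y₁) by module,
              norm_smul, Real.norm_eq_abs, abs_of_pos ht0]
          rw [hin, hnr] at h1
          have h3 : ((p + t*c - ε*(t*‖y - y₁‖) : ℝ) : EReal)
              ≤ (((1-t) * p + t * ry : ℝ) : EReal) := h1.trans h2
          rw [EReal.coe_le_coe_iff] at h3
          nlinarith
        rw [hGy, EReal.coe_le_coe_iff]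
        by_contra hcon
        push_neg at hcon
        have h4 := key ((p + c - ry)/(2*‖y - y₁‖)) (div_pos (by linarith) (by positivity))
        have h5 : (p + c - ry)/(2*‖y - y₁‖) * ‖y - y₁‖ = (p + c - ry)/2 := by
          field_simp
        linarith
  -- lower bound on g
  have hglow : ∀ y, ((p + ⟪v₁, y - y₁⟫ - γ * ‖y - xb‖^2 : ℝ) : EReal) ≤ g y := by
    intro y
    have h2 : G y ≤ g y + ((γ * ‖y - xb‖^2 : ℝ) : EReal) := by
      have h0 := happ₁ xb y
      rw [← hgxdef] at h0
      calc G y = gx y + ((γ/2 * ‖y - xb‖^2 : ℝ) : EReal) := hGeq y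
        _ ≤ (g y + ((γ/2 * ‖y - xb‖^2 : ℝ) : EReal)) + ((γ/2 * ‖y - xb‖^2 : ℝ) : EReal) :=
            add_le_add_left h0 _
        _ = g y + ((γ * ‖y - xb‖^2 : ℝ) : EReal) := by
            rw [add_assoc, ← EReal.coe_add]
            congr 2
            ring
    have h3 := (hglob y).trans h2
    rw [coe_le_add_coe_iff] at h3
    exact h3
  -- g y₁ is finite
  have hgle : ∀ y, g y ≤ G y := by
    intro y
    have h0 := happ₂ xb y
    rw [← hgxdef] at h0
    exact h0.trans (le_of_eq (hGeq y).symm)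
  have hg1T : g y₁ ≠ ⊤ := by
    intro h
    have := hgle y₁
    rw [h, hGy1, top_le_iff] at this
    exact EReal.coe_ne_top _ this
  set r₁ := (g y₁).toReal with hr₁
  have hgy1 : g y₁ = (r₁ : EReal) := (EReal.coe_toReal hg1T (hgbot y₁)).symm
  have hr₁p : r₁ ≤ p := by
    have := hgle y₁
    rw [hgy1, hGy1, EReal.coe_le_coe_iff] at this
    exact this
  -- the penalty parameter
  set α := if ‖y₁ - xb‖ = 0 then γ else γ * ‖y₁ - xb‖^2 / (2 * lam^2) with hα
  have hα0 : 0 < α := by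
    rw [hα]
    split_ifs with h
    · exact hγ
    · have hx0 : 0 < ‖y₁ - xb‖ := (norm_nonneg _).lt_of_ne (Ne.symm h)
      positivity
  clear_value α
  set φf := fun y : EuclideanSpace ℝ (Fin d) =>
    (-⟪v₁, y - y₁⟫ + γ * ‖y - xb‖^2 + α/2 * ‖y - y₁‖^2 : ℝ) with hφf
  set ψ := fun y : EuclideanSpace ℝ (Fin d) => g y + ((φf y : ℝ) : EReal) with hψdef
  have hψeq : ∀ y, ψ y = g y + ((φf y : ℝ) : EReal) := fun y => rfl
  have hψlsc : LowerSemicontinuous ψ := by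
    have hφcont : Continuous φf := by
      rw [hφf]
      have h1 : Continuous (fun y : EuclideanSpace ℝ (Fin d) => ⟪v₁, y - y₁⟫) :=
        continuous_const.inner (continuous_id.sub continuous_const)
      have h2 : Continuous (fun y : EuclideanSpace ℝ (Fin d) => ‖y - xb‖) :=
        (continuous_id.sub continuous_const).norm
      have h3 : Continuous (fun y : EuclideanSpace ℝ (Fin d) => ‖y - y₁‖) :=
        (continuous_id.sub continuous_const).norm
      exact (h1.neg.add (continuous_const.mul (h2.pow 2))).add
        (continuous_const.mul (h3.pow 2))
    have hcont : Continuous fun y => ((φf y : ℝ) : EReal) :=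
      continuous_coe_real_ereal.comp hφcont
    exact hglsc.add' hcont.lowerSemicontinuous
      (fun z => EReal.continuousAt_add (Or.inr (EReal.coe_ne_bot _))
        (Or.inr (EReal.coe_ne_top _)))
  have hψlb : ∀ y, ((p + α/2 * ‖y - y₁‖^2 : ℝ) : EReal) ≤ ψ y := by
    intro y
    have h1 := hglow y
    have h2 := add_le_add_left h1 ((φf y : ℝ) : EReal)
    refine le_trans (le_of_eq ?_) h2
    rw [← EReal.coe_add]
    refine EReal.coe_eq_coe_iff.mpr ?_
    rw [hφf]
    ring
  have hφy1 : φf y₁ = γ * ‖y₁ - xb‖^2 := by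
    rw [hφf]
    simp [sub_self, inner_zero_right]
  have hψy1 : ψ y₁ = ((r₁ + γ * ‖y₁ - xb‖^2 : ℝ) : EReal) := by
    rw [hψeq, hφy1, hgy1, ← EReal.coe_add]
  set R := 2*lam + 1 with hR
  have hR0 : (0:ℝ) < R := by rw [hR]; linarith
  have hRbig : γ * ‖y₁ - xb‖^2 < α/2 * R^2 := by
    rw [hα]
    split_ifs with h
    · rw [h]
      have : (0:ℝ) < γ/2 * R^2 := by positivity
      simpa using this
    · have hx0 : 0 < ‖y₁ - xb‖ := (norm_nonneg _).lt_of_ne (Ne.symm h)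
      rw [div_div, div_mul_eq_mul_div, lt_div_iff₀ (by positivity), hR]
      nlinarith [mul_pos hγ (pow_pos hx0 2), hlam]
  obtain ⟨y₂, hy₂ball, hy₂min⟩ := lsc_min_on_compact hψlsc (isCompact_closedBall y₁ R)
    ⟨y₁, mem_closedBall_self hR0.le⟩
  have hψ21 : ψ y₂ ≤ ψ y₁ := hy₂min y₁ (mem_closedBall_self hR0.le)
  have hglobalmin : ∀ y, ψ y₂ ≤ ψ y := by
    intro y
    by_cases hy : y ∈ closedBall y₁ R
    · exact hy₂min y hy
    · have hfar : R < ‖y - y₁‖ := by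
        rw [mem_closedBall, dist_eq_norm, not_le] at hy
        exact hy
      refine hψ21.trans (le_trans ?_ (hψlb y))
      rw [hψy1, EReal.coe_le_coe_iff]
      have h1 : α/2 * R^2 ≤ α/2 * ‖y - y₁‖^2 :=
        mul_le_mul_of_nonneg_left (pow_le_pow_left₀ hR0.le hfar.le 2) (by positivity)
      linarith
  have hψ2T : ψ y₂ ≠ ⊤ := by
    intro h
    rw [h, hψy1, top_le_iff] at hψ21
    exact EReal.coe_ne_top _ hψ21
  have hg2T : g y₂ ≠ ⊤ := by
    intro h
    exact hψ2T (by rw [hψeq, h, EReal.top_add_of_ne_bot (EReal.coe_ne_bot _)])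
  set r₂ := (g y₂).toReal with hr₂
  have hgy2 : g y₂ = (r₂ : EReal) := (EReal.coe_toReal hg2T (hgbot y₂)).symm
  have hψ2 : ψ y₂ = ((r₂ + φf y₂ : ℝ) : EReal) := by
    rw [hψeq, hgy2, ← EReal.coe_add]
  have hkey : α/2 * ‖y₂ - y₁‖^2 ≤ γ * ‖y₁ - xb‖^2 := by
    have h1 : r₂ + φf y₂ ≤ r₁ + γ * ‖y₁ - xb‖^2 := by
      rw [hψ2, hψy1, EReal.coe_le_coe_iff] at hψ21
      exact hψ21
    have h2 : p + ⟪v₁, y₂ - y₁⟫ - γ * ‖y₂ - xb‖^2 ≤ r₂ := by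
      have := hglow y₂
      rw [hgy2, EReal.coe_le_coe_iff] at this
      exact this
    have hφ2 : φf y₂ = -⟪v₁, y₂ - y₁⟫ + γ * ‖y₂ - xb‖^2 + α/2 * ‖y₂ - y₁‖^2 := by
      rw [hφf]
    rw [hφ2] at h1
    linarith [hr₁p, h1, h2]
  have hzero : ‖y₁ - xb‖ = 0 → ‖y₂ - y₁‖ = 0 := by
    intro h
    have hk := hkey
    rw [hα, if_pos h, h] at hk
    have h0 : ‖y₂ - y₁‖^2 ≤ 0 := by nlinarith
    have h1 := sq_nonneg ‖y₂ - y₁‖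
    exact pow_eq_zero_iff two_ne_zero |>.mp (le_antisymm h0 h1)
  have h2lam : ‖y₁ - y₂‖ ≤ 2 * lam := by
    rw [norm_sub_rev]
    have hk := hkey
    rw [hα] at hk
    split_ifs at hk with h
    · rw [hzero h]
      linarith
    · have hx0 : 0 < ‖y₁ - xb‖ := (norm_nonneg _).lt_of_ne (Ne.symm h)
      have hden : (0:ℝ) < 2 * lam^2 * 2 := by positivity
      have hsq : ‖y₂ - y₁‖^2 ≤ 4 * lam^2 := by
        rw [div_div, div_mul_eq_mul_div, div_le_iff₀ hden] at hk
        nlinarith [mul_pos hγ (pow_pos hx0 2)]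
      nlinarith [norm_nonneg (y₂ - y₁)]
  set w := v₁ - (2*γ) • (y₂ - xb) - α • (y₂ - y₁) with hw
  have hwmem : w ∈ frechetSubdiff g y₂ := by
    refine ⟨hg2T, hgbot y₂, fun ε hε => ?_⟩
    refine ⟨ε / (γ + α/2), by positivity, fun y hy => ?_⟩
    have hmy := hglobalmin y
    rw [hψ2, hψeq, coe_le_add_coe_iff] at hmy
    refine le_trans (EReal.coe_le_coe_iff.mpr ?_) hmy
    have hr2eq : (g y₂).toReal = r₂ := rfl
    rw [hr2eq]
    have hnorm1 : ‖y - xb‖^2 = ‖y₂ - xb‖^2 + 2*⟪y₂ - xb, y - y₂⟫ + ‖y - y₂‖^2 := by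
      rw [show y - xb = (y₂ - xb) + (y - y₂) by module]
      exact normsq_expand _ _
    have hnorm2 : ‖y - y₁‖^2 = ‖y₂ - y₁‖^2 + 2*⟪y₂ - y₁, y - y₂⟫ + ‖y - y₂‖^2 := by
      rw [show y - y₁ = (y₂ - y₁) + (y - y₂) by module]
      exact normsq_expand _ _
    have hinner : ⟪v₁, y - y₁⟫ = ⟪v₁, y₂ - y₁⟫ + ⟪v₁, y - y₂⟫ := by
      rw [show y - y₁ = (y₂ - y₁) + (y - y₂) by module, inner_add_right]
    have hw_inner : ⟪w, y - y₂⟫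
        = ⟪v₁, y - y₂⟫ - 2*γ*⟪y₂ - xb, y - y₂⟫ - α*⟪y₂ - y₁, y - y₂⟫ := by
      rw [hw, inner_sub_left, inner_sub_left, real_inner_smul_left,
        real_inner_smul_left]
    have hφdiff : φf y₂ - φf y = ⟪w, y - y₂⟫ - (γ + α/2) * ‖y - y₂‖^2 := by
      simp only [hφf]
      rw [hnorm1, hnorm2, hinner, hw_inner]
      ring
    have hquad : (γ + α/2) * ‖y - y₂‖^2 ≤ ε * ‖y - y₂‖ := by
      have hn0 : 0 ≤ ‖y - y₂‖ := norm_nonneg _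
      have hc0 : 0 < γ + α/2 := by linarith
      have hyy : ‖y - y₂‖ < ε / (γ + α/2) := hy
      rw [lt_div_iff₀ hc0] at hyy
      nlinarith [mul_le_mul_of_nonneg_right hyy.le hn0]
    clear_value w φf r₂ p r₁ ψ
    linarith [hφdiff, hquad]
  refine ⟨y₂, h2lam, ⟨w, hwmem⟩, ?_⟩
  refine le_trans (infDist_le_dist_of_mem hwmem) ?_
  rw [dist_eq_norm]
  have hvw : v₁ - w = (2*γ) • (y₂ - xb) + α • (y₂ - y₁) := by
    rw [hw]
    module
  rw [hvw]
  refine le_trans (norm_add_le _ _) ?_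
  rw [norm_smul, norm_smul, Real.norm_eq_abs, Real.norm_eq_abs,
    abs_of_pos (by linarith : (0:ℝ) < 2*γ), abs_of_pos hα0]
  have hlast : α * ‖y₂ - y₁‖ ≤ γ * ‖y₁ - xb‖^2 / lam := by
    have hk := hkey
    rw [hα] at hk ⊢
    split_ifs with h
    · rw [hzero h, h]
      norm_num
    · have hn : ‖y₂ - y₁‖ ≤ 2*lam := by
        rw [norm_sub_rev]
        exact h2lam
      have h1 : γ * ‖y₁ - xb‖^2 / (2 * lam^2) * ‖y₂ - y₁‖
          ≤ γ * ‖y₁ - xb‖^2 / (2 * lam^2) * (2*lam) :=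
        mul_le_mul_of_nonneg_left hn (by positivity)
      refine h1.trans (le_of_eq ?_)
      field_simp
  linarith
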